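/- Let ℓ ≥ 1 be an integer and assume X_{ℓ-1}⁺ = S (the ℓ-controllability condition). Then the branch group B is solvable if and only if the subgroup X₀ is solvable. -/

import Mathlib

open Pointwise

namespace GroupCodes

variable {S : Type*} [Group S]

/-- The subgroups `Xₙ` of the branch group `B ≤ S × S`: `X₀ = {b ∈ B : b⁻ = 1}` and
`X_{n+1} = {b ∈ B : b⁻ ∈ Xₙ⁺}` (here `b⁻ = b.1`, `b⁺ = b.2`, `U⁺ = snd '' U`). -/
def Xnat (B : Subgroup (S × S)) : ℕ → Subgroup (S × S)
  | 0 => B ⊓ (MonoidHom.fst S S).ker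
  | n + 1 => B ⊓ (Subgroup.map (MonoidHom.snd S S) (Xnat B n)).comap (MonoidHom.fst S S)

/-- The subgroups `Yₙ` of the branch group `B ≤ S × S`: `Y₀ = {b ∈ B : b⁺ = 1}` and
`Y_{n+1} = {b ∈ B : b⁺ ∈ Yₙ⁻}`. -/
def Ynat (B : Subgroup (S × S)) : ℕ → Subgroup (S × S)
  | 0 => B ⊓ (MonoidHom.snd S S).ker
  | n + 1 => B ⊓ (Subgroup.map (MonoidHom.fst S S) (Ynat B n)).comap (MonoidHom.snd S S)

/-- `X i` for an integer index `i`, trivial for `i < 0`. -/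
def X (B : Subgroup (S × S)) (i : ℤ) : Subgroup (S × S) :=
  if i < 0 then ⊥ else Xnat B i.toNat

/-- `Y i` for an integer index `i`, trivial for `i < 0`. -/
def Y (B : Subgroup (S × S)) (i : ℤ) : Subgroup (S × S) :=
  if i < 0 then ⊥ else Ynat B i.toNat

/-- The next-branch set `N(U) = {b ∈ B : b⁻ ∈ U⁺}`. -/
def N (B U : Subgroup (S × S)) : Subgroup (S × S) :=
  B ⊓ (Subgroup.map (MonoidHom.snd S S) U).comap (MonoidHom.fst S S)

/-- The previous-branch set `P(U) = {b ∈ B : b⁺ ∈ U⁻}`. -/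
def P (B U : Subgroup (S × S)) : Subgroup (S × S) :=
  B ⊓ (Subgroup.map (MonoidHom.fst S S) U).comap (MonoidHom.snd S S)

/-- `IsQuotIso J H J' H'` says that `J` (viewed inside `H`) is normal in `H`, `J'` is normal
in `H'`, and there is a group isomorphism `H / J ≅ H' / J'`. -/
def IsQuotIso {G₁ G₂ : Type*} [Group G₁] [Group G₂]
    (J H : Subgroup G₁) (J' H' : Subgroup G₂) : Prop :=
  (J.subgroupOf H).Normal ∧ (J'.subgroupOf H').Normal ∧
    ∀ [(J.subgroupOf H).Normal] [(J'.subgroupOf H').Normal],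
      Nonempty ((H ⧸ J.subgroupOf H) ≃* (H' ⧸ J'.subgroupOf H'))

/-- `T` is a right transversal of `J` inside `H`: `T ⊆ H` and `T` meets every right coset
of `J` contained in `H` in exactly one element. -/
def IsRightTransversalIn {G : Type*} [Group G] (J H : Subgroup G) (T : Set G) : Prop :=
  T ⊆ (H : Set G) ∧ ∀ h ∈ H, ∃! t, t ∈ T ∧ t * h⁻¹ ∈ J

/-- The group of trellis path segments `(b₀, …, bₙ)` with `b_j ∈ F j` and matching states
`b_j⁺ = b_{j+1}⁻`; a subgroup of the direct product `(S × S)^{n+1}`. -/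
def chainSubgroup (n : ℕ) (F : ℤ → Subgroup (S × S)) : Subgroup (Fin (n + 1) → S × S) where
  carrier := {b | (∀ i : Fin (n + 1), b i ∈ F (i : ℤ)) ∧
    ∀ i : Fin n, (b i.castSucc).2 = (b i.succ).1}
  one_mem' := ⟨fun _ => one_mem _, fun _ => rfl⟩
  mul_mem' := by
    rintro a b ⟨ha1, ha2⟩ ⟨hb1, hb2⟩
    refine ⟨fun i => mul_mem (ha1 i) (hb1 i), fun i => ?_⟩
    simp only [Pi.mul_apply, Prod.snd_mul, Prod.fst_mul, ha2 i, hb2 i]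
  inv_mem' := by
    rintro a ⟨ha1, ha2⟩
    refine ⟨fun i => inv_mem (ha1 i), fun i => ?_⟩
    simp only [Pi.inv_apply, Prod.snd_inv, Prod.fst_inv, ha2 i]

/-- `U ⨝ N(U)`: the group of trellis path segments `(b, b')` of length two with `b ∈ U`,
`b' ∈ N(U)` and `b⁺ = b'⁻`; a subgroup of the direct product `(S × S) × (S × S)`. -/
def JoinN (B U : Subgroup (S × S)) : Subgroup ((S × S) × (S × S)) where
  carrier := {p | p.1 ∈ U ∧ p.2 ∈ N B U ∧ p.1.2 = p.2.1}
  one_mem' := ⟨one_mem _, one_mem _, rfl⟩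
  mul_mem' := by
    rintro a b ⟨ha1, ha2, ha3⟩ ⟨hb1, hb2, hb3⟩
    exact ⟨mul_mem ha1 hb1, mul_mem ha2 hb2, by
      simp only [Prod.fst_mul, Prod.snd_mul, ha3, hb3]⟩
  inv_mem' := by
    rintro a ⟨ha1, ha2, ha3⟩
    exact ⟨inv_mem ha1, inv_mem ha2, by
      simp only [Prod.fst_inv, Prod.snd_inv, ha3]⟩

private lemma solvable_of_le {G : Type*} [Group G] {J K : Subgroup G} (h : J ≤ K)
    [Group.IsSolvable K] : Group.IsSolvable J :=
  solvable_of_solvable_injective (Subgroup.inclusion_injective h)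

private lemma solvable_map {G G' : Type*} [Group G] [Group G'] (f : G →* G') (H : Subgroup G)
    [Group.IsSolvable H] : Group.IsSolvable (H.map f) := by
  have : Group.IsSolvable (f.comp H.subtype).range :=
    solvable_of_surjective (f.comp H.subtype).rangeRestrict_surjective
  rwa [MonoidHom.range_comp, Subgroup.range_subtype] at this

private lemma Xnat_solvable (B : Subgroup (S × S)) (h0 : Group.IsSolvable (Xnat B 0)) :
    ∀ n, Group.IsSolvable (Xnat B n)
  | 0 => h0
  | n + 1 => by
    haveI := Xnat_solvable B h0 n
    set K := Subgroup.map (MonoidHom.snd S S) (Xnat B n) with hK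
    haveI : Group.IsSolvable K := solvable_map _ _
    have hmem : ∀ b : Xnat B (n + 1), (b : S × S).1 ∈ K := by
      intro b
      exact (Subgroup.mem_inf.mp (b.2 : (b : S × S) ∈ B ⊓ K.comap (MonoidHom.fst S S))).2
    set g : ↥(Xnat B (n + 1)) →* K :=
      ((MonoidHom.fst S S).comp (Xnat B (n + 1)).subtype).codRestrict K hmem with hg
    have hle : Xnat B 0 ≤ Xnat B (n + 1) := by
      intro b hb
      rw [show Xnat B 0 = B ⊓ (MonoidHom.fst S S).ker from rfl, Subgroup.mem_inf] at hb
      have h1 : b.1 = 1 := hb.2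
      exact Subgroup.mem_inf.mpr ⟨hb.1, by simp [Subgroup.mem_comap, h1, one_mem]⟩
    set f : ↥(Xnat B 0) →* ↥(Xnat B (n + 1)) := Subgroup.inclusion hle with hf
    have hkr : g.ker ≤ f.range := by
      intro x hx
      have hx1 : (x : S × S).1 = 1 := by
        have := congrArg (Subtype.val) hx
        exact this
      have hxB : (x : S × S) ∈ B :=
        (Subgroup.mem_inf.mp (x.2 : (x : S × S) ∈ B ⊓ K.comap (MonoidHom.fst S S))).1
      have hx0 : (x : S × S) ∈ Xnat B 0 := by
        rw [show Xnat B 0 = B ⊓ (MonoidHom.fst S S).ker from rfl, Subgroup.mem_inf]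
        exact ⟨hxB, hx1⟩
      exact ⟨⟨(x : S × S), hx0⟩, rfl⟩
    exact solvable_of_ker_le_range f g hkr

/-- if the trellis is `ℓ`-controllable (`X_{ℓ-1}⁺ = S`), then the branch group
`B` is solvable iff `X₀` is solvable. -/
theorem branch_group_solvable_iff_X0_solvable
    (B : Subgroup (S × S))
    (hB1 : Subgroup.map (MonoidHom.fst S S) B = ⊤)
    (hB2 : Subgroup.map (MonoidHom.snd S S) B = ⊤)
    (ℓ : ℤ) (hℓ : 1 ≤ ℓ)
    (hctl : Subgroup.map (MonoidHom.snd S S) (X B (ℓ - 1)) = ⊤) :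
    IsSolvable ↥B ↔ IsSolvable ↥(X B 0) := by
  have hX0 : X B 0 = Xnat B 0 := by simp [X]
  constructor
  · intro hB
    have : Group.IsSolvable ↥B := hB
    rw [hX0]
    exact solvable_of_le (inf_le_left : B ⊓ (MonoidHom.fst S S).ker ≤ B)
  · intro h0
    rw [hX0] at h0
    haveI := Xnat_solvable B h0 (ℓ - 1).toNat
    have hXl : X B (ℓ - 1) = Xnat B (ℓ - 1).toNat := by
      rw [X, if_neg (by omega)]
    rw [hXl] at hctl
    haveI : Group.IsSolvable (Subgroup.map (MonoidHom.snd S S) (Xnat B (ℓ - 1).toNat)) :=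
      solvable_map _ _
    rw [hctl] at this
    haveI : Group.IsSolvable S := solvable_of_surjective
      (f := (Subgroup.topEquiv (G := S)).toMonoidHom) (Subgroup.topEquiv (G := S)).surjective
    haveI : Group.IsSolvable (S × S) := inferInstance
    exact solvable_of_solvable_injective B.subtype_injective

end GroupCodes
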